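/- Let F : A ⥤ B be a spherical functor (the cotwist C is an autoequivalence and the canonical map R → RFL → CL[1] is an isomorphism). Then the natural transformation (Rη_L, η_R L) : R ⊕ L ⟶ RFL with components R →Rη_L RFL and L →η_R L RFL is an isomorphism of functors, and dually (ε_L R, Lε_R) : LFR ⟶ R ⊕ L is an isomorphism of functors. -/

import Mathlib

open CategoryTheory Category Limits Pretriangulated

section SplittingLemmas

variable {𝒞 : Type*} [Category 𝒞] [HasShift 𝒞 ℤ] [Preadditive 𝒞] [HasZeroObject 𝒞]
  [∀ n : ℤ, (shiftFunctor 𝒞 n).Additive] [Pretriangulated 𝒞] [HasBinaryBiproducts 𝒞]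

/-- If `q : W ⟶ Z` composes with the connecting map of a distinguished triangle to an
isomorphism, then `(g, q) : Y ⊞ W ⟶ Z` is an isomorphism. -/
lemma descSplit_of_distTriang {T : Triangle 𝒞} (hT : T ∈ distTriang 𝒞) {W : 𝒞}
    (q : W ⟶ T.obj₃) (hq : IsIso (q ≫ T.mor₃)) : IsIso (biprod.desc T.mor₂ q) := by
  have h23 := comp_distTriang_mor_zero₂₃ _ hT
  have h31 := comp_distTriang_mor_zero₃₁ _ hT
  let φ : binaryBiproductTriangle T.obj₂ W ⟶ T.rotate :=
    { hom₁ := 𝟙 _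
      hom₂ := biprod.desc T.mor₂ q
      hom₃ := q ≫ T.mor₃
      comm₁ := by
        change biprod.inl ≫ biprod.desc T.mor₂ q = 𝟙 T.obj₂ ≫ T.mor₂
        simp
      comm₂ := by
        change (biprod.snd : T.obj₂ ⊞ W ⟶ W) ≫ q ≫ T.mor₃ = biprod.desc T.mor₂ q ≫ T.mor₃
        apply biprod.hom_ext' <;> simp [h23]
      comm₃ := by
        change (0 : W ⟶ T.obj₂⟦(1 : ℤ)⟧) ≫ (𝟙 T.obj₂)⟦(1 : ℤ)⟧' = (q ≫ T.mor₃) ≫ (-T.mor₁⟦(1 : ℤ)⟧')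
        simp [h31] }
  have : IsIso φ.hom₁ := by dsimp [φ]; exact IsIso.id _
  have : IsIso φ.hom₃ := hq
  exact isIso₂_of_isIso₁₃ φ (binaryBiproductTriangle_distinguished _ _)
    (rot_of_distTriang _ hT) ‹_› ‹_›

/-- If `p : Y ⟶ W` composes with the first map of a distinguished triangle to an
isomorphism, then `(p, g) : Y ⟶ W ⊞ Z` is an isomorphism. -/
lemma liftSplit_of_distTriang {T : Triangle 𝒞} (hT : T ∈ distTriang 𝒞) {W : 𝒞}
    (p : T.obj₂ ⟶ W) (hp : IsIso (T.mor₁ ≫ p)) : IsIso (biprod.lift p T.mor₂) := by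
  have h12 := comp_distTriang_mor_zero₁₂ _ hT
  have h31 := comp_distTriang_mor_zero₃₁ _ hT
  let φ : T ⟶ binaryBiproductTriangle W T.obj₃ :=
    { hom₁ := T.mor₁ ≫ p
      hom₂ := biprod.lift p T.mor₂
      hom₃ := 𝟙 _
      comm₁ := by
        change T.mor₁ ≫ biprod.lift p T.mor₂ = (T.mor₁ ≫ p) ≫ (biprod.inl : W ⟶ W ⊞ T.obj₃)
        apply biprod.hom_ext <;> simp [h12]
      comm₂ := by
        change T.mor₂ ≫ 𝟙 T.obj₃ = biprod.lift p T.mor₂ ≫ biprod.snd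
        simp
      comm₃ := by
        change T.mor₃ ≫ (T.mor₁ ≫ p)⟦(1 : ℤ)⟧' = 𝟙 T.obj₃ ≫ (0 : T.obj₃ ⟶ W⟦(1 : ℤ)⟧)
        simp [Functor.map_comp, reassoc_of% h31] }
  have : IsIso φ.hom₁ := hp
  have : IsIso φ.hom₃ := by dsimp [φ]; exact IsIso.id _
  exact isIso₂_of_isIso₁₃ φ hT (binaryBiproductTriangle_distinguished _ _) ‹_› ‹_›

end SplittingLemmas

/-- Lemma 2.3(ii): let `F : A ⥤ B` be a spherical functor (the cotwist `C` is an
autoequivalence and the canonical map `R → RFL → CL[1]` is an isomorphism).  Then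
`(Rη_L, η_R L) : R ⊕ L ⟶ RFL` and `(ε_L R, Lε_R) : LFR ⟶ R ⊕ L` are isomorphisms of
functors (stated objectwise via binary biproducts). -/
theorem RFL_splits_of_spherical {A B : Type*} [Category A] [Category B]
    [HasShift A ℤ] [HasShift B ℤ] [Preadditive A] [Preadditive B]
    [HasZeroObject A] [HasZeroObject B]
    [∀ n : ℤ, (shiftFunctor A n).Additive] [∀ n : ℤ, (shiftFunctor B n).Additive]
    [Pretriangulated A] [Pretriangulated B] [HasBinaryBiproducts A]
    (F : A ⥤ B) [F.CommShift ℤ] [F.IsTriangulated]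
    (L R : B ⥤ A) [L.CommShift ℤ] [L.IsTriangulated] [R.CommShift ℤ] [R.IsTriangulated]
    (adjL : L ⊣ F) (adjR : F ⊣ R)
    (C : A ⥤ A) [C.IsEquivalence]
    (δR : C ⟶ 𝟭 A) (γR : F ⋙ R ⟶ C ⋙ shiftFunctor A (1 : ℤ))
    (hC : ∀ a : A, Triangle.mk (δR.app a) (adjR.unit.app a) (γR.app a) ∈ distTriang A)
    (T : B ⥤ B) (αR : 𝟭 B ⟶ T) (βR : T ⟶ (R ⋙ F) ⋙ shiftFunctor B (1 : ℤ))
    (hT : ∀ b : B, Triangle.mk (adjR.counit.app b) (αR.app b) (βR.app b) ∈ distTriang B)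
    (hcan : ∀ b : B, IsIso (R.map (adjL.unit.app b) ≫ γR.app (L.obj b))) :
    ∀ b : B,
      IsIso (biprod.desc (R.map (adjL.unit.app b)) (adjR.unit.app (L.obj b)) :
        R.obj b ⊞ L.obj b ⟶ R.obj (F.obj (L.obj b))) ∧
      IsIso (biprod.lift (adjL.counit.app (R.obj b)) (L.map (adjR.counit.app b)) :
        L.obj (F.obj (R.obj b)) ⟶ R.obj b ⊞ L.obj b) := by
  -- the "inflation" functor `S = C ⋙ [1]`, an equivalence
  let S : A ⥤ A := C ⋙ shiftFunctor A (1 : ℤ)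
  have CAdd : C.Additive := by
    have : C.PreservesZeroMorphisms := inferInstance
    have : PreservesLimitsOfShape (Discrete WalkingPair) C := inferInstance
    exact Functor.additive_of_preserves_binary_products C
  have SAdd : S.Additive := Functor.instAdditiveComp _ _
  have SEquiv : S.IsEquivalence := inferInstance
  -- naturality of the canonical map `ρ : R ⟶ L ⋙ S`
  have ρnat : ∀ {b₁ b₂ : B} (t : b₁ ⟶ b₂),
      R.map t ≫ R.map (adjL.unit.app b₂) ≫ γR.app (L.obj b₂)
        = R.map (adjL.unit.app b₁) ≫ γR.app (L.obj b₁) ≫ S.map (L.map t) := by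
    intro b₁ b₂ t
    dsimp [S]
    rw [← assoc, ← R.map_comp]
    have h1 : t ≫ adjL.unit.app b₂ = adjL.unit.app b₁ ≫ F.map (L.map t) := by
      simpa using adjL.unit.naturality t
    rw [h1, R.map_comp, assoc]
    have h2 := γR.naturality (L.map t)
    dsimp at h2
    rw [h2]
  intro b
  constructor
  · -- part (i): the triangle `hC (L.obj b)` together with `hcan b`
    have hq : IsIso (R.map (adjL.unit.app b) ≫
        (Triangle.mk (δR.app (L.obj b)) (adjR.unit.app (L.obj b)) (γR.app (L.obj b))).mor₃) :=
      hcan b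
    have h := descSplit_of_distTriang (hC (L.obj b)) (R.map (adjL.unit.app b)) hq
    have heq : (biprod.desc (R.map (adjL.unit.app b)) (adjR.unit.app (L.obj b)) :
          R.obj b ⊞ L.obj b ⟶ R.obj (F.obj (L.obj b)))
        = (biprod.braiding _ _).hom ≫
            biprod.desc (adjR.unit.app (L.obj b)) (R.map (adjL.unit.app b)) := by
      apply biprod.hom_ext' <;> simp
    rw [heq]
    exact IsIso.comp_isIso' inferInstance h
  · -- part (ii)
    -- the splitting `e : RFRb ≅ Rb ⊞ S(Rb)` coming from the triangle `hC (R.obj b)`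
    have he : IsIso (biprod.lift (R.map (adjR.counit.app b)) (γR.app (R.obj b)) :
        R.obj (F.obj (R.obj b)) ⟶ R.obj b ⊞ S.obj (R.obj b)) := by
      have hp : IsIso ((Triangle.mk (δR.app (R.obj b)) (adjR.unit.app (R.obj b))
          (γR.app (R.obj b))).rotate.mor₁ ≫ R.map (adjR.counit.app b)) := by
        dsimp [Triangle.rotate]
        change IsIso (adjR.unit.app (R.obj b) ≫ R.map (adjR.counit.app b))
        rw [adjR.right_triangle_components]
        exact IsIso.id _
      exact liftSplit_of_distTriang (rot_of_distTriang _ (hC (R.obj b)))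
        (R.map (adjR.counit.app b)) hp
    -- component computations
    have ha : R.map (adjL.unit.app (F.obj (R.obj b))) ≫ γR.app (L.obj (F.obj (R.obj b)))
        ≫ S.map (adjL.counit.app (R.obj b)) = γR.app (R.obj b) := by
      have h2 := γR.naturality (adjL.counit.app (R.obj b))
      dsimp at h2
      dsimp [S]
      rw [← h2, ← assoc, ← R.map_comp, adjL.right_triangle_components, R.map_id, id_comp]
    have hb : R.map (adjL.unit.app (F.obj (R.obj b))) ≫ γR.app (L.obj (F.obj (R.obj b)))
        ≫ S.map (L.map (adjR.counit.app b))
        = R.map (adjR.counit.app b) ≫ R.map (adjL.unit.app b) ≫ γR.app (L.obj b) :=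
      (ρnat (adjR.counit.app b)).symm
    -- the key identity
    have key : (R.map (adjL.unit.app (F.obj (R.obj b))) ≫ γR.app (L.obj (F.obj (R.obj b))))
        ≫ (S.map (biprod.lift (adjL.counit.app (R.obj b)) (L.map (adjR.counit.app b)) :
            L.obj (F.obj (R.obj b)) ⟶ R.obj b ⊞ L.obj b)
            ≫ S.biprodComparison (R.obj b) (L.obj b))
        = (biprod.lift (R.map (adjR.counit.app b)) (γR.app (R.obj b)) :
            R.obj (F.obj (R.obj b)) ⟶ R.obj b ⊞ S.obj (R.obj b))
          ≫ biprod.lift biprod.snd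
              (biprod.fst ≫ (R.map (adjL.unit.app b) ≫ γR.app (L.obj b))) := by
      apply biprod.hom_ext
      · simp only [assoc]
        rw [Functor.biprodComparison_fst, ← S.map_comp]
        conv_lhs => erw [biprod.lift_fst]
        conv_rhs => rw [biprod.lift_fst, biprod.lift_snd]
        exact ha
      · simp only [assoc]
        rw [Functor.biprodComparison_snd, ← S.map_comp]
        conv_lhs => erw [biprod.lift_snd]
        rw [hb]
        conv_rhs => rw [biprod.lift_snd, ← assoc, biprod.lift_fst]
    -- assemble: all other maps in `key` are isomorphisms
    haveI hρ' : IsIso (R.map (adjL.unit.app (F.obj (R.obj b)))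
        ≫ γR.app (L.obj (F.obj (R.obj b)))) := hcan _
    haveI hW : IsIso (S.biprodComparison (R.obj b) (L.obj b)) := by
      refine ⟨⟨S.biprodComparison' (R.obj b) (L.obj b), ?_, ?_⟩⟩
      · dsimp [Functor.biprodComparison, Functor.biprodComparison']
        rw [biprod.lift_desc, ← S.map_comp, ← S.map_comp, ← S.map_add, biprod.total, S.map_id]
      · exact Functor.biprodComparison'_comp_biprodComparison S _ _
    haveI hρb : IsIso (R.map (adjL.unit.app b) ≫ γR.app (L.obj b)) := hcan b
    haveI hM : IsIso (biprod.lift (biprod.snd : R.obj b ⊞ S.obj (R.obj b) ⟶ _)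
        (biprod.fst ≫ (R.map (adjL.unit.app b) ≫ γR.app (L.obj b)))) := by
      refine ⟨⟨biprod.lift
        (biprod.snd ≫ inv (R.map (adjL.unit.app b) ≫ γR.app (L.obj b))) biprod.fst, ?_, ?_⟩⟩
      · apply biprod.hom_ext <;> simp
      · apply biprod.hom_ext <;> simp
    haveI : IsIso ((R.map (adjL.unit.app (F.obj (R.obj b)))
        ≫ γR.app (L.obj (F.obj (R.obj b))))
        ≫ (S.map (biprod.lift (adjL.counit.app (R.obj b)) (L.map (adjR.counit.app b)) :
            L.obj (F.obj (R.obj b)) ⟶ R.obj b ⊞ L.obj b)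
            ≫ S.biprodComparison (R.obj b) (L.obj b))) := by
      rw [key]; infer_instance
    haveI : IsIso (S.map (biprod.lift (adjL.counit.app (R.obj b)) (L.map (adjR.counit.app b)) :
            L.obj (F.obj (R.obj b)) ⟶ R.obj b ⊞ L.obj b)
        ≫ S.biprodComparison (R.obj b) (L.obj b)) :=
      IsIso.of_isIso_comp_left (R.map (adjL.unit.app (F.obj (R.obj b)))
        ≫ γR.app (L.obj (F.obj (R.obj b)))) _
    haveI : IsIso (S.map (biprod.lift (adjL.counit.app (R.obj b)) (L.map (adjR.counit.app b)) :
            L.obj (F.obj (R.obj b)) ⟶ R.obj b ⊞ L.obj b)) :=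
      IsIso.of_isIso_comp_right _ (S.biprodComparison (R.obj b) (L.obj b))
    exact isIso_of_reflects_iso _ S
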